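/- Let V : ℝ^d → ℝ be differentiable with ∇V Lipschitz with constant K, τ ≤ 1/(2K), and h > 0. Let x₀ ∈ ℝ^d, let x₁ be the unconstrained minimizer of x ↦ V(x) + |x − x₀|²/(2τ) over ℝ^d, and let x₁^h be a minimizer of the same functional over the grid hℤ^d. Then |x₁^h − x₁| ≤ (1 + 4Kτ)·h. -/

import Mathlib

open InnerProductSpace

variable {E : Type*} [NormedAddCommGroup E] [InnerProductSpace ℝ E] [CompleteSpace E]

lemma descent_aux (V : E → ℝ) (gradV : E → E)
    (hgrad : ∀ x, HasGradientAt V (gradV x) x)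
    (K : NNReal) (hK : LipschitzWith K gradV) (x y : E) :
    |V y - V x - (inner ℝ (gradV x) (y - x) : ℝ)| ≤ (K : ℝ) / 2 * ‖y - x‖ ^ 2 := by
  set A : ℝ := inner ℝ (gradV x) (y - x) with hA
  set c : ℝ := (K : ℝ) / 2 * ‖y - x‖ ^ 2 with hc
  have hc_nonneg : 0 ≤ c := by positivity
  -- the path
  have hcurve : ∀ t : ℝ, HasDerivAt (fun s : ℝ => x + s • (y - x)) (y - x) t := by
    intro t
    simpa using ((hasDerivAt_id t).smul_const (y - x)).const_add x
  have hphi : ∀ t : ℝ, HasDerivAt (fun s : ℝ => V (x + s • (y - x)))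
      (inner ℝ (gradV (x + t • (y - x))) (y - x) : ℝ) t := by
    intro t
    have := ((hgrad (x + t • (y - x))).hasFDerivAt.comp_hasDerivAt t (hcurve t))
    simpa [toDual_apply_apply, Function.comp_def] using this
  -- the key inner product bound
  have hbound : ∀ t : ℝ, 0 ≤ t →
      (inner ℝ (gradV (x + t • (y - x))) (y - x) : ℝ) - A ≤ (K : ℝ) * t * ‖y - x‖ ^ 2 := by
    intro t ht
    have h1 : (inner ℝ (gradV (x + t • (y - x))) (y - x) : ℝ) - A
        = inner ℝ (gradV (x + t • (y - x)) - gradV x) (y - x) := by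
      rw [hA, inner_sub_left]
    rw [h1]
    calc (inner ℝ (gradV (x + t • (y - x)) - gradV x) (y - x) : ℝ)
        ≤ ‖gradV (x + t • (y - x)) - gradV x‖ * ‖y - x‖ := real_inner_le_norm _ _
      _ ≤ ((K : ℝ) * ‖(x + t • (y - x)) - x‖) * ‖y - x‖ := by
          gcongr
          have := hK.dist_le_mul (x + t • (y - x)) x
          simpa [dist_eq_norm] using this
      _ = (K : ℝ) * t * ‖y - x‖ ^ 2 := by
          have : ‖(x + t • (y - x)) - x‖ = t * ‖y - x‖ := by
            simp [add_sub_cancel_left, norm_smul, abs_of_nonneg ht]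
          rw [this]; ring
  have hbound' : ∀ t : ℝ, 0 ≤ t →
      -((K : ℝ) * t * ‖y - x‖ ^ 2) ≤ (inner ℝ (gradV (x + t • (y - x))) (y - x) : ℝ) - A := by
    intro t ht
    have h1 : (inner ℝ (gradV (x + t • (y - x))) (y - x) : ℝ) - A
        = inner ℝ (gradV (x + t • (y - x)) - gradV x) (y - x) := by
      rw [hA, inner_sub_left]
    rw [h1]
    have h2 : |(inner ℝ (gradV (x + t • (y - x)) - gradV x) (y - x) : ℝ)|
        ≤ (K : ℝ) * t * ‖y - x‖ ^ 2 := by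
      calc |(inner ℝ (gradV (x + t • (y - x)) - gradV x) (y - x) : ℝ)|
          ≤ ‖gradV (x + t • (y - x)) - gradV x‖ * ‖y - x‖ := abs_real_inner_le_norm _ _
        _ ≤ ((K : ℝ) * ‖(x + t • (y - x)) - x‖) * ‖y - x‖ := by
            gcongr
            have := hK.dist_le_mul (x + t • (y - x)) x
            simpa [dist_eq_norm] using this
        _ = (K : ℝ) * t * ‖y - x‖ ^ 2 := by
            have : ‖(x + t • (y - x)) - x‖ = t * ‖y - x‖ := by
              simp [add_sub_cancel_left, norm_smul, abs_of_nonneg ht]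
            rw [this]; ring
    linarith [(abs_le.mp h2).1]
  -- upper bound: g t = V(c t) - t A - c t², antitone on [0,1]
  have upper : V y - V x - A ≤ c := by
    set g : ℝ → ℝ := fun t => V (x + t • (y - x)) - t * A - c * t ^ 2 with hg
    have hgderiv : ∀ t : ℝ, HasDerivAt g
        ((inner ℝ (gradV (x + t • (y - x))) (y - x) : ℝ) - A - (K : ℝ) * t * ‖y - x‖ ^ 2) t := by
      intro t
      have h1 := (hphi t).sub ((hasDerivAt_id t).mul_const A)
      have h2 := (hasDerivAt_pow 2 t).const_mul c
      have := h1.sub h2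
      exact this.congr_deriv (by simp [hc]; ring)
    have hanti : AntitoneOn g (Set.Icc (0:ℝ) 1) := by
      apply antitoneOn_of_deriv_nonpos (convex_Icc 0 1)
      · exact fun t _ => ((hgderiv t).continuousAt).continuousWithinAt
      · intro t _
        exact ((hgderiv t).differentiableAt).differentiableWithinAt
      · intro t ht
        rw [interior_Icc] at ht
        rw [(hgderiv t).deriv]
        have := hbound t ht.1.le
        linarith
    have := hanti (Set.mem_Icc.mpr ⟨le_refl 0, zero_le_one⟩)
      (Set.mem_Icc.mpr ⟨zero_le_one, le_refl 1⟩) zero_le_one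
    simp only [hg, zero_smul, add_zero, one_smul, zero_mul, mul_zero, zero_pow,
      one_pow, mul_one, sub_zero] at this
    have hxy : x + (y - x) = y := by abel
    rw [hxy] at this
    linarith [this]
  -- lower bound
  have lower : -c ≤ V y - V x - A := by
    set g : ℝ → ℝ := fun t => V (x + t • (y - x)) - t * A + c * t ^ 2 with hg
    have hgderiv : ∀ t : ℝ, HasDerivAt g
        ((inner ℝ (gradV (x + t • (y - x))) (y - x) : ℝ) - A + (K : ℝ) * t * ‖y - x‖ ^ 2) t := by
      intro t
      have h1 := (hphi t).sub ((hasDerivAt_id t).mul_const A)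
      have h2 := (hasDerivAt_pow 2 t).const_mul c
      have := h1.add h2
      exact this.congr_deriv (by simp [hc]; ring)
    have hmono : MonotoneOn g (Set.Icc (0:ℝ) 1) := by
      apply monotoneOn_of_deriv_nonneg (convex_Icc 0 1)
      · exact fun t _ => ((hgderiv t).continuousAt).continuousWithinAt
      · intro t _
        exact ((hgderiv t).differentiableAt).differentiableWithinAt
      · intro t ht
        rw [interior_Icc] at ht
        rw [(hgderiv t).deriv]
        have := hbound' t ht.1.le
        linarith
    have := hmono (Set.mem_Icc.mpr ⟨le_refl 0, zero_le_one⟩)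
      (Set.mem_Icc.mpr ⟨zero_le_one, le_refl 1⟩) zero_le_one
    simp only [hg, zero_smul, add_zero, one_smul, zero_mul, mul_zero, zero_pow,
      one_pow, mul_one, sub_zero] at this
    have hxy : x + (y - x) = y := by abel
    rw [hxy] at this
    linarith [this]
  rw [abs_le]
  exact ⟨lower, upper⟩



set_option maxHeartbeats 1000000

/-- one-step error between the unconstrained proximal step `x₁` and its
grid-constrained version `x₁ʰ`, for a potential with `K`-Lipschitz gradient and
`τ ≤ 1/(2K)`: `|x₁ʰ − x₁| ≤ (1 + 4Kτ) h`. A grid point within distance `h` of `x₁`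
is assumed to exist. -/
theorem stmt_6 (d : ℕ) (V : EuclideanSpace ℝ (Fin d) → ℝ)
    (gradV : EuclideanSpace ℝ (Fin d) → EuclideanSpace ℝ (Fin d))
    (hgrad : ∀ x, HasGradientAt V (gradV x) x)
    (K : NNReal) (hKpos : 0 < (K : ℝ)) (hK : LipschitzWith K gradV)
    (τ h : ℝ) (hτ : 0 < τ) (hτK : τ ≤ 1 / (2 * (K : ℝ))) (hh : 0 < h)
    (x₀ x₁ x₁h : EuclideanSpace ℝ (Fin d))
    (hmin : ∀ y : EuclideanSpace ℝ (Fin d),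
      V x₁ + ‖x₁ - x₀‖ ^ 2 / (2 * τ) ≤ V y + ‖y - x₀‖ ^ 2 / (2 * τ))
    (hx₁h_grid : ∀ i, ∃ k : ℤ, x₁h i = h * k)
    (hminh : ∀ y : EuclideanSpace ℝ (Fin d), (∀ i, ∃ k : ℤ, y i = h * k) →
      V x₁h + ‖x₁h - x₀‖ ^ 2 / (2 * τ) ≤ V y + ‖y - x₀‖ ^ 2 / (2 * τ))
    (hnear : ∃ z : EuclideanSpace ℝ (Fin d), (∀ i, ∃ k : ℤ, z i = h * k) ∧ ‖z - x₁‖ ≤ h) :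
    ‖x₁h - x₁‖ ≤ (1 + 4 * (K : ℝ) * τ) * h := by
  obtain ⟨z, hz_grid, hz_near⟩ := hnear
  set F : EuclideanSpace ℝ (Fin d) → ℝ := fun y => V y + ‖y - x₀‖ ^ 2 / (2 * τ) with hF
  have hτ2 : (0:ℝ) < 2 * τ := by linarith
  -- expansion of F around x₁
  have hexp : ∀ y : EuclideanSpace ℝ (Fin d), F y - F x₁ = (V y - V x₁)
      + (2 * (inner ℝ (x₁ - x₀) (y - x₁) : ℝ) + ‖y - x₁‖ ^ 2) / (2 * τ) := by
    intro y
    have h1 : y - x₀ = (x₁ - x₀) + (y - x₁) := by abel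
    have h2 : ‖y - x₀‖ ^ 2 = ‖x₁ - x₀‖ ^ 2 + 2 * (inner ℝ (x₁ - x₀) (y - x₁) : ℝ)
        + ‖y - x₁‖ ^ 2 := by rw [h1]; exact norm_add_sq_real _ _
    simp only [hF]
    rw [h2]
    field_simp
    ring
  have hdesc := fun (x y : EuclideanSpace ℝ (Fin d)) => descent_aux V gradV hgrad K hK x y
  set w : EuclideanSpace ℝ (Fin d) := gradV x₁ + τ⁻¹ • (x₁ - x₀) with hw
  have hinner_w : ∀ y : EuclideanSpace ℝ (Fin d), (inner ℝ w (y - x₁) : ℝ)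
      = (inner ℝ (gradV x₁) (y - x₁) : ℝ) + τ⁻¹ * (inner ℝ (x₁ - x₀) (y - x₁) : ℝ) := by
    intro y
    rw [hw, inner_add_left, real_inner_smul_left]
  -- first-order condition: w = 0
  have hw0 : w = 0 := by
    by_contra hwne
    have hwpos : 0 < ‖w‖ := norm_pos_iff.mpr hwne
    have hden : (0:ℝ) < (K : ℝ) + 1 / τ := by positivity
    set t : ℝ := 1 / ((K : ℝ) + 1 / τ) with ht
    have htpos : 0 < t := by positivity
    set y : EuclideanSpace ℝ (Fin d) := x₁ - t • w with hy
    have hymx : y - x₁ = -(t • w) := by rw [hy]; abel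
    have hny : ‖y - x₁‖ ^ 2 = t ^ 2 * ‖w‖ ^ 2 := by
      rw [hymx, norm_neg, norm_smul, Real.norm_eq_abs, abs_of_pos htpos, mul_pow]
    have hiw : (inner ℝ w (y - x₁) : ℝ) = -(t * ‖w‖ ^ 2) := by
      rw [hymx, inner_neg_right, real_inner_smul_right, real_inner_self_eq_norm_sq]
      try ring
    have hlow : (0 : ℝ) ≤ F y - F x₁ := by
      have := hmin y
      simp only [hF]
      linarith
    have hVy : V y - V x₁ ≤ (inner ℝ (gradV x₁) (y - x₁) : ℝ)
        + (K : ℝ) / 2 * ‖y - x₁‖ ^ 2 := by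
      have := (abs_le.mp (hdesc x₁ y)).2
      linarith
    have key : (2 * (inner ℝ (x₁ - x₀) (y - x₁) : ℝ) + ‖y - x₁‖ ^ 2) / (2 * τ)
        = τ⁻¹ * (inner ℝ (x₁ - x₀) (y - x₁) : ℝ) + 1 / (2 * τ) * ‖y - x₁‖ ^ 2 := by
      field_simp
    have hFy : F y - F x₁ ≤ (inner ℝ w (y - x₁) : ℝ)
        + ((K : ℝ) / 2 + 1 / (2 * τ)) * ‖y - x₁‖ ^ 2 := by
      rw [hexp y, key, hinner_w y]
      have expand : ((K : ℝ) / 2 + 1 / (2 * τ)) * ‖y - x₁‖ ^ 2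
          = (K : ℝ) / 2 * ‖y - x₁‖ ^ 2 + 1 / (2 * τ) * ‖y - x₁‖ ^ 2 := by ring
      rw [expand]
      linarith
    rw [hiw, hny] at hFy
    have h5 : ((K : ℝ) / 2 + 1 / (2 * τ)) * t = 1 / 2 := by
      rw [ht]
      field_simp
      try ring
    have h7 : ((K : ℝ) / 2 + 1 / (2 * τ)) * (t ^ 2 * ‖w‖ ^ 2)
        = 1 / 2 * (t * ‖w‖ ^ 2) := by
      calc ((K : ℝ) / 2 + 1 / (2 * τ)) * (t ^ 2 * ‖w‖ ^ 2)
          = (((K : ℝ) / 2 + 1 / (2 * τ)) * t) * (t * ‖w‖ ^ 2) := by ring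
        _ = 1 / 2 * (t * ‖w‖ ^ 2) := by rw [h5]
    have h8 : 0 < t * ‖w‖ ^ 2 := by positivity
    rw [h7] at hFy
    have h12 := hlow.trans hFy
    linarith
  have hfo : ∀ y : EuclideanSpace ℝ (Fin d), (inner ℝ (gradV x₁) (y - x₁) : ℝ)
      + τ⁻¹ * (inner ℝ (x₁ - x₀) (y - x₁) : ℝ) = 0 := by
    intro y
    rw [← hinner_w y, hw0, inner_zero_left]
  -- rewrite F y - F x₁ using the first-order condition
  have hFexp : ∀ y : EuclideanSpace ℝ (Fin d), F y - F x₁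
      = (V y - V x₁ - (inner ℝ (gradV x₁) (y - x₁) : ℝ)) + ‖y - x₁‖ ^ 2 / (2 * τ) := by
    intro y
    have key : (2 * (inner ℝ (x₁ - x₀) (y - x₁) : ℝ) + ‖y - x₁‖ ^ 2) / (2 * τ)
        = τ⁻¹ * (inner ℝ (x₁ - x₀) (y - x₁) : ℝ) + ‖y - x₁‖ ^ 2 / (2 * τ) := by
      field_simp
    rw [hexp y, key]
    have h4 := hfo y
    linarith
  -- strong convexity lower bound at x₁h
  have hlow : (1 / (2 * τ) - (K : ℝ) / 2) * ‖x₁h - x₁‖ ^ 2 ≤ F x₁h - F x₁ := by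
    rw [hFexp x₁h]
    have h9 := (abs_le.mp (hdesc x₁ x₁h)).1
    have expand : (1 / (2 * τ) - (K : ℝ) / 2) * ‖x₁h - x₁‖ ^ 2
        = ‖x₁h - x₁‖ ^ 2 / (2 * τ) - (K : ℝ) / 2 * ‖x₁h - x₁‖ ^ 2 := by ring
    rw [expand]
    linarith
  -- smoothness upper bound at z
  have hup : F z - F x₁ ≤ ((K : ℝ) / 2 + 1 / (2 * τ)) * h ^ 2 := by
    rw [hFexp z]
    have h10 := (abs_le.mp (hdesc x₁ z)).2
    have hz2 : ‖z - x₁‖ ^ 2 ≤ h ^ 2 := pow_le_pow_left₀ (norm_nonneg _) hz_near 2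
    have expand : ((K : ℝ) / 2 + 1 / (2 * τ)) * h ^ 2
        = (K : ℝ) / 2 * h ^ 2 + h ^ 2 / (2 * τ) := by ring
    rw [expand]
    have hK2 : (K : ℝ) / 2 * ‖z - x₁‖ ^ 2 ≤ (K : ℝ) / 2 * h ^ 2 := by
      apply mul_le_mul_of_nonneg_left hz2
      positivity
    have hq : ‖z - x₁‖ ^ 2 / (2 * τ) ≤ h ^ 2 / (2 * τ) := by
      gcongr
    linarith
  have hzh : F x₁h ≤ F z := hminh z hz_grid
  have hzh' : F x₁h - F x₁ ≤ F z - F x₁ := by linarith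
  set N := ‖x₁h - x₁‖ with hN
  have hNnn : 0 ≤ N := norm_nonneg _
  have hKτ : (K : ℝ) * τ ≤ 1 / 2 := by
    rw [le_div_iff₀ (by positivity : (0:ℝ) < 2 * (K : ℝ))] at hτK
    linarith
  have hchain : (1 / (2 * τ) - (K : ℝ) / 2) * N ^ 2 ≤ ((K : ℝ) / 2 + 1 / (2 * τ)) * h ^ 2 :=
    hlow.trans (hzh'.trans hup)
  -- multiply by 2τ
  have hchain2 : (1 - (K : ℝ) * τ) * N ^ 2 ≤ (1 + (K : ℝ) * τ) * h ^ 2 := by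
    have := mul_le_mul_of_nonneg_left hchain hτ2.le
    calc (1 - (K : ℝ) * τ) * N ^ 2
        = 2 * τ * ((1 / (2 * τ) - (K : ℝ) / 2) * N ^ 2) := by field_simp
      _ ≤ 2 * τ * (((K : ℝ) / 2 + 1 / (2 * τ)) * h ^ 2) := this
      _ = (1 + (K : ℝ) * τ) * h ^ 2 := by field_simp; ring
  have hKτpos : 0 < (K : ℝ) * τ := mul_pos hKpos hτ
  have h1t : (1:ℝ) / 2 ≤ 1 - (K : ℝ) * τ := by linarith
  have key2 : (1 + (K : ℝ) * τ) * h ^ 2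
      ≤ (1 - (K : ℝ) * τ) * ((1 + 4 * (K : ℝ) * τ) * h) ^ 2 := by
    nlinarith [mul_nonneg hKτpos.le (sq_nonneg h),
      mul_nonneg (mul_nonneg (mul_nonneg hKτpos.le hKτpos.le)
        (sub_nonneg.2 hKτ)) (sq_nonneg h)]
  have hsq : N ^ 2 ≤ ((1 + 4 * (K : ℝ) * τ) * h) ^ 2 := by
    have h11 : (1 - (K : ℝ) * τ) * N ^ 2
        ≤ (1 - (K : ℝ) * τ) * ((1 + 4 * (K : ℝ) * τ) * h) ^ 2 := le_trans hchain2 key2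
    exact le_of_mul_le_mul_left h11 (by linarith)
  have hBnn : 0 ≤ (1 + 4 * (K : ℝ) * τ) * h := by positivity
  calc N = Real.sqrt (N ^ 2) := (Real.sqrt_sq hNnn).symm
    _ ≤ Real.sqrt (((1 + 4 * (K : ℝ) * τ) * h) ^ 2) := Real.sqrt_le_sqrt hsq
    _ = (1 + 4 * (K : ℝ) * τ) * h := Real.sqrt_sq hBnn
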